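/- arXiv:1501.06103 — 2 statements merged into one kernel-verified Lean document; each statement's English description precedes it below -/
import Mathlib

section
/- Suppose the mean embedding μ ↦ ∫ k(·,x) dμ(x) of finite signed Borel measures into ℱ is injective, and likewise for l into 𝒢. If the covariance operator C_{YX} = ∫ ψ(y) ⊗ φ(x) dθ(x,y) equals zero, then θ = 0, i.e., P_{XY} = P_X ⊗ P_Y. -/
open MeasureTheory Filter Set
open scoped InnerProductSpace ENNReal NNReal Topology

/-- Bochner integral of `f` against a finite signed measure `s`, defined via the
Jordan decomposition `s = s⁺ - s⁻`. -/
noncomputable def sInt {X E : Type*} [MeasurableSpace X] [NormedAddCommGroup E]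
    [NormedSpace ℝ E] [CompleteSpace E] (s : SignedMeasure X) (f : X → E) : E :=
  (∫ x, f x ∂s.toJordanDecomposition.posPart) - ∫ x, f x ∂s.toJordanDecomposition.negPart

/-- The rank-one operator `a ⊗ b : f ↦ ⟪b, f⟫ • a`. -/
noncomputable def rank1 {F G : Type*} [NormedAddCommGroup F] [InnerProductSpace ℝ F]
    [NormedAddCommGroup G] [InnerProductSpace ℝ G] (a : G) (b : F) : F →L[ℝ] G :=
  (innerSL ℝ b).smulRight a

section helpers
variable {X E : Type*} [MeasurableSpace X] [NormedAddCommGroup E] [NormedSpace ℝ E] [CompleteSpace E]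

omit [NormedSpace ℝ E] [CompleteSpace E] in
lemma integrable_of_bdd {μ : Measure X} [IsFiniteMeasure μ] {f : X → E}
    (hf : AEStronglyMeasurable f μ) {C : ℝ} (hC : ∀ x, ‖f x‖ ≤ C) : Integrable f μ :=
  (integrable_const C).mono' hf (Filter.Eventually.of_forall hC)

omit [NormedAddCommGroup E] in
lemma measure_eq_of_toSignedMeasure_eq {a b : Measure X} [IsFiniteMeasure a] [IsFiniteMeasure b]
    (h : a.toSignedMeasure = b.toSignedMeasure) : a = b := by
  ext s hs
  have h2 := congrArg (fun v : SignedMeasure X => v s) h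
  simp only [Measure.toSignedMeasure_apply_measurable hs] at h2
  exact (ENNReal.toReal_eq_toReal_iff' (measure_ne_top a s) (measure_ne_top b s)).mp h2

lemma sInt_zero {f : X → E} : sInt (0 : SignedMeasure X) f = 0 := by
  simp [sInt, SignedMeasure.toJordanDecomposition_zero]

lemma sInt_sub_eq {a b : Measure X} [IsFiniteMeasure a] [IsFiniteMeasure b]
    {f : X → E} (hf : StronglyMeasurable f) {C : ℝ} (hC : ∀ x, ‖f x‖ ≤ C) :
    sInt (a.toSignedMeasure - b.toSignedMeasure) f = (∫ x, f x ∂a) - ∫ x, f x ∂b := by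
  set s := a.toSignedMeasure - b.toSignedMeasure with hsdef
  set p := s.toJordanDecomposition.posPart with hpdef
  set n := s.toJordanDecomposition.negPart with hndef
  have hs : p.toSignedMeasure - n.toSignedMeasure = s := s.toSignedMeasure_toJordanDecomposition
  have key : a + n = b + p := by
    ext S hS
    have h1 : (p S).toReal - (n S).toReal = (a S).toReal - (b S).toReal := by
      have e1 := congrArg (fun v : SignedMeasure X => v S) hs
      simp only [hsdef, VectorMeasure.sub_apply,
        Measure.toSignedMeasure_apply_measurable hS] at e1
      exact e1
    have h2 : (a S).toReal + (n S).toReal = (b S).toReal + (p S).toReal := by linarith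
    rw [← ENNReal.toReal_add (measure_ne_top a S) (measure_ne_top n S),
        ← ENNReal.toReal_add (measure_ne_top b S) (measure_ne_top p S)] at h2
    have h3 := (ENNReal.toReal_eq_toReal_iff' (by finiteness) (by finiteness)).mp h2
    simpa [Measure.add_apply] using h3
  have hint : ∀ (μ : Measure X) [IsFiniteMeasure μ], Integrable f μ := fun μ _ =>
    integrable_of_bdd hf.aestronglyMeasurable hC
  have h4 : (∫ x, f x ∂a) + ∫ x, f x ∂n = (∫ x, f x ∂b) + ∫ x, f x ∂p := by
    rw [← integral_add_measure (hint a) (hint n), ← integral_add_measure (hint b) (hint p), key]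
  show (∫ x, f x ∂p) - ∫ x, f x ∂n = (∫ x, f x ∂a) - ∫ x, f x ∂b
  rw [sub_eq_sub_iff_add_eq_add, add_comm]
  exact h4.symm

omit [MeasurableSpace X] [NormedSpace ℝ E] [CompleteSpace E] in
lemma continuous_of_kernel {φ : X → E} [TopologicalSpace X] [InnerProductSpace ℝ E]
    (h : Continuous fun p : X × X => ⟪φ p.1, φ p.2⟫_ℝ) : Continuous φ := by
  rw [continuous_iff_continuousAt]
  intro x0
  rw [ContinuousAt, tendsto_iff_norm_sub_tendsto_zero]
  have hc : Continuous fun x =>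
      ⟪φ x, φ x⟫_ℝ - 2 * ⟪φ x, φ x0⟫_ℝ + ⟪φ x0, φ x0⟫_ℝ := by
    have c1 : Continuous fun x : X => ⟪φ x, φ x⟫_ℝ :=
      h.comp (continuous_id.prodMk continuous_id)
    have c2 : Continuous fun x : X => ⟪φ x, φ x0⟫_ℝ :=
      h.comp (continuous_id.prodMk continuous_const)
    exact (c1.sub (continuous_const.mul c2)).add continuous_const
  have h1 : Tendsto (fun x => ‖φ x - φ x0‖ ^ 2) (𝓝 x0) (𝓝 0) := by
    have ht := hc.tendsto x0
    have hval : ⟪φ x0, φ x0⟫_ℝ - 2 * ⟪φ x0, φ x0⟫_ℝ + ⟪φ x0, φ x0⟫_ℝ = 0 := by ring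
    rw [hval] at ht
    refine ht.congr fun x => ?_
    rw [@norm_sub_sq_real, real_inner_self_eq_norm_sq, real_inner_self_eq_norm_sq]
  have h2 := (Real.continuous_sqrt.tendsto' 0 0 Real.sqrt_zero).comp h1
  refine h2.congr fun x => ?_
  simp [Real.sqrt_sq (norm_nonneg _)]

end helpers

lemma isFiniteMeasure_withDensity_nnreal {X : Type*} [MeasurableSpace X]
    {μ : Measure X} [IsFiniteMeasure μ] {h : X → ℝ≥0}
    {C : ℝ≥0} (hC : ∀ x, h x ≤ C) :
    IsFiniteMeasure (μ.withDensity fun x => (h x : ℝ≥0∞)) := by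
  constructor
  rw [withDensity_apply _ MeasurableSet.univ, setLIntegral_univ]
  calc ∫⁻ x, (h x : ℝ≥0∞) ∂μ ≤ ∫⁻ _, (C : ℝ≥0∞) ∂μ :=
        lintegral_mono fun x => ENNReal.coe_le_coe.mpr (hC x)
    _ = (C : ℝ≥0∞) * μ univ := lintegral_const _
    _ < ⊤ := by finiteness

lemma integral_eq_of_lintegral_eq {X : Type*} [MeasurableSpace X] {μ ν : Measure X} [IsFiniteMeasure μ] [IsFiniteMeasure ν]
    {h : X → ℝ} (hμ : Integrable h μ) (hν : Integrable h ν)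
    (heq : (∫⁻ x, ENNReal.ofReal (h x) ∂μ) + ∫⁻ x, ENNReal.ofReal (-h x) ∂ν
         = (∫⁻ x, ENNReal.ofReal (-h x) ∂μ) + ∫⁻ x, ENNReal.ofReal (h x) ∂ν) :
    ∫ x, h x ∂μ = ∫ x, h x ∂ν := by
  have fin : ∀ {κ : Measure X}, Integrable h κ → ∀ (r : ℝ → ℝ), (∀ x, |r x| ≤ |x|) →
      (∫⁻ x, ENNReal.ofReal (r (h x)) ∂κ) ≠ ⊤ := by
    intro κ hκ r hr
    refine ne_top_of_le_ne_top hκ.2.ne (lintegral_mono fun x => ?_)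
    rw [Real.enorm_eq_ofReal_abs]
    exact ENNReal.ofReal_le_ofReal ((le_abs_self _).trans (hr (h x)))
  have f1 := fin hμ id fun x => le_of_eq (abs_of_nonneg (abs_nonneg x) ▸ rfl)
  have f2 := fin hμ (fun x => -x) fun x => by simp
  have f3 := fin hν id fun x => le_of_eq (abs_of_nonneg (abs_nonneg x) ▸ rfl)
  have f4 := fin hν (fun x => -x) fun x => by simp
  simp only [id] at f1 f3
  have hT := congrArg ENNReal.toReal heq
  rw [ENNReal.toReal_add f1 f4, ENNReal.toReal_add f2 f3] at hT
  rw [integral_eq_lintegral_pos_part_sub_lintegral_neg_part hμ,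
      integral_eq_lintegral_pos_part_sub_lintegral_neg_part hν]
  linarith

theorem stmt1 {𝒳 𝒴 : Type*} [MeasurableSpace 𝒳] [TopologicalSpace 𝒳] [PolishSpace 𝒳] [BorelSpace 𝒳]
    [MeasurableSpace 𝒴] [TopologicalSpace 𝒴] [PolishSpace 𝒴] [BorelSpace 𝒴] {F G : Type*} [NormedAddCommGroup F] [InnerProductSpace ℝ F] [CompleteSpace F] [MeasurableSpace F] [BorelSpace F]
    [NormedAddCommGroup G] [InnerProductSpace ℝ G] [CompleteSpace G] [MeasurableSpace G] [BorelSpace G] (φ : 𝒳 → F) (ψ : 𝒴 → G) (hφm : Measurable φ) (hψm : Measurable ψ)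
    (Bφ Bψ : ℝ) (hφb : ∀ x, ‖φ x‖ ≤ Bφ) (hψb : ∀ y, ‖ψ y‖ ≤ Bψ)
    (hkc : Continuous (fun p : 𝒳 × 𝒳 => ⟪φ p.1, φ p.2⟫_ℝ))
    (hlc : Continuous (fun p : 𝒴 × 𝒴 => ⟪ψ p.1, ψ p.2⟫_ℝ))
    (hk : Function.Injective (fun μ : SignedMeasure 𝒳 => sInt μ φ)) (hl : Function.Injective (fun ν : SignedMeasure 𝒴 => sInt ν ψ))
    (P : Measure (𝒳 × 𝒴)) [IsProbabilityMeasure P]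
    (θ : SignedMeasure (𝒳 × 𝒴))
    (hθ : θ = P.toSignedMeasure
      - ((P.map Prod.fst).prod (P.map Prod.snd)).toSignedMeasure)
    (hC : sInt θ (fun p => rank1 (ψ p.2) (φ p.1)) = 0) :
    θ = 0 := by
  classical
  haveI : SecondCountableTopology (𝒳 × 𝒴) := by infer_instance
  haveI : SecondCountableTopologyEither (𝒳 × 𝒴) (F →L[ℝ] G) :=
    secondCountableTopologyEither_of_left _ _
  have hφc : Continuous φ := continuous_of_kernel hkc
  have hψc : Continuous ψ := continuous_of_kernel hlc
  have hφsm : StronglyMeasurable φ := hφc.stronglyMeasurable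
  have hψsm : StronglyMeasurable ψ := hψc.stronglyMeasurable
  set Bφ' := max Bφ 0 with hBφ'
  set Bψ' := max Bψ 0 with hBψ'
  have hBφ0 : 0 ≤ Bφ' := le_max_right _ _
  have hBψ0 : 0 ≤ Bψ' := le_max_right _ _
  have hφb' : ∀ x, ‖φ x‖ ≤ Bφ' := fun x => (hφb x).trans (le_max_left _ _)
  have hψb' : ∀ y, ‖ψ y‖ ≤ Bψ' := fun y => (hψb y).trans (le_max_left _ _)
  set p := θ.toJordanDecomposition.posPart with hpdef
  set q := θ.toJordanDecomposition.negPart with hqdef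
  -- Step 1 : scalar identity
  have hRnorm : ∀ (a : G) (b : F), ‖rank1 a b‖ = ‖b‖ * ‖a‖ := by
    intro a b
    rw [rank1, ContinuousLinearMap.norm_smulRight_apply, innerSL_apply_norm]
  have hRc : Continuous (fun pr : 𝒳 × 𝒴 => rank1 (ψ pr.2) (φ pr.1)) := by
    have h1 : Continuous fun pr : 𝒳 × 𝒴 =>
        ContinuousLinearMap.smulRightL ℝ F G (innerSL ℝ (φ pr.1)) :=
      ((ContinuousLinearMap.smulRightL ℝ F G).continuous.comp
        ((innerSL ℝ).continuous.comp (hφc.comp continuous_fst)))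
    exact h1.clm_apply (hψc.comp continuous_snd)
  have hRsm : StronglyMeasurable (fun pr : 𝒳 × 𝒴 => rank1 (ψ pr.2) (φ pr.1)) :=
    hRc.stronglyMeasurable
  have hRint : ∀ (μ : Measure (𝒳 × 𝒴)) [IsFiniteMeasure μ],
      Integrable (fun pr : 𝒳 × 𝒴 => rank1 (ψ pr.2) (φ pr.1)) μ := by
    intro μ _
    refine integrable_of_bdd hRsm.aestronglyMeasurable (C := Bφ' * Bψ') fun pr => ?_
    rw [hRnorm]
    exact mul_le_mul (hφb' _) (hψb' _) (norm_nonneg _) hBφ0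
  have E1 : ∀ (f : F) (g : G),
      (∫ pr : 𝒳 × 𝒴, ⟪φ pr.1, f⟫_ℝ * ⟪ψ pr.2, g⟫_ℝ ∂p)
        = ∫ pr : 𝒳 × 𝒴, ⟪φ pr.1, f⟫_ℝ * ⟪ψ pr.2, g⟫_ℝ ∂q := by
    intro f g
    have h0 : (∫ pr : 𝒳 × 𝒴, rank1 (ψ pr.2) (φ pr.1) ∂p)
        = ∫ pr : 𝒳 × 𝒴, rank1 (ψ pr.2) (φ pr.1) ∂q := by
      have h := hC
      simp only [sInt] at h
      exact sub_eq_zero.mp h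
    set L : (F →L[ℝ] G) →L[ℝ] ℝ :=
      (innerSL ℝ g).comp (ContinuousLinearMap.apply ℝ G f) with hL
    have h2 := congrArg L h0
    rw [← L.integral_comp_comm (hRint p), ← L.integral_comp_comm (hRint q)] at h2
    have h3 : ∀ pr : 𝒳 × 𝒴, L (rank1 (ψ pr.2) (φ pr.1)) = ⟪φ pr.1, f⟫_ℝ * ⟪ψ pr.2, g⟫_ℝ := by
      intro pr
      simp only [hL, rank1, ContinuousLinearMap.coe_comp', Function.comp_apply,
        ContinuousLinearMap.apply_apply, ContinuousLinearMap.smulRight_apply,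
        innerSL_apply_apply, real_inner_smul_right]
      rw [real_inner_comm (ψ pr.2) g]
    simp only [h3] at h2
    exact h2
  -- Step 2 + 3 : p and q agree on measurable rectangles
  have hrect : ∀ A : Set 𝒳, MeasurableSet A → ∀ B : Set 𝒴, MeasurableSet B →
      p (A ×ˢ B) = q (A ×ˢ B) := by
    intro A hA B hB
    set S : Set (𝒳 × 𝒴) := Prod.fst ⁻¹' A with hSdef
    have hS : MeasurableSet S := measurable_fst hA
    have E2 : ∀ g : G, (∫ pr : 𝒳 × 𝒴, ⟪ψ pr.2, g⟫_ℝ ∂(p.restrict S))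
        = ∫ pr : 𝒳 × 𝒴, ⟪ψ pr.2, g⟫_ℝ ∂(q.restrict S) := by
      intro g
      set h : 𝒳 × 𝒴 → ℝ := fun pr => ⟪ψ pr.2, g⟫_ℝ with hhdef
      have hhc : Continuous h := (hψc.comp continuous_snd).inner continuous_const
      have hhb : ∀ pr, |h pr| ≤ Bψ' * ‖g‖ := fun pr =>
        (abs_real_inner_le_norm _ _).trans (mul_le_mul_of_nonneg_right (hψb' _) (norm_nonneg _))
      set dpos : 𝒳 × 𝒴 → ℝ≥0 := fun pr => (h pr).toNNReal with hdpos
      set dneg : 𝒳 × 𝒴 → ℝ≥0 := fun pr => (-h pr).toNNReal with hdneg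
      have hdposm : Measurable dpos := hhc.measurable.real_toNNReal
      have hdnegm : Measurable dneg := hhc.measurable.neg.real_toNNReal
      have hdposb : ∀ pr, dpos pr ≤ (Bψ' * ‖g‖).toNNReal := fun pr =>
        Real.toNNReal_mono ((le_abs_self _).trans (hhb pr))
      have hdnegb : ∀ pr, dneg pr ≤ (Bψ' * ‖g‖).toNNReal := fun pr =>
        Real.toNNReal_mono ((neg_le_abs _).trans (hhb pr))
      haveI i1 : IsFiniteMeasure (p.withDensity fun pr => (dpos pr : ℝ≥0∞)) :=
        isFiniteMeasure_withDensity_nnreal hdposb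
      haveI i2 : IsFiniteMeasure (p.withDensity fun pr => (dneg pr : ℝ≥0∞)) :=
        isFiniteMeasure_withDensity_nnreal hdnegb
      haveI i3 : IsFiniteMeasure (q.withDensity fun pr => (dpos pr : ℝ≥0∞)) :=
        isFiniteMeasure_withDensity_nnreal hdposb
      haveI i4 : IsFiniteMeasure (q.withDensity fun pr => (dneg pr : ℝ≥0∞)) :=
        isFiniteMeasure_withDensity_nnreal hdnegb
      set ma : Measure (𝒳 × 𝒴) :=
        p.withDensity (fun pr => (dpos pr : ℝ≥0∞)) + q.withDensity (fun pr => (dneg pr : ℝ≥0∞))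
        with hma
      set mb : Measure (𝒳 × 𝒴) :=
        p.withDensity (fun pr => (dneg pr : ℝ≥0∞)) + q.withDensity (fun pr => (dpos pr : ℝ≥0∞))
        with hmb
      set a : Measure 𝒳 := ma.map Prod.fst with hadef
      set b : Measure 𝒳 := mb.map Prod.fst with hbdef
      haveI : IsFiniteMeasure a := by
        constructor
        rw [hadef, Measure.map_apply measurable_fst MeasurableSet.univ]
        exact measure_lt_top _ _
      haveI : IsFiniteMeasure b := by
        constructor
        rw [hbdef, Measure.map_apply measurable_fst MeasurableSet.univ]
        exact measure_lt_top _ _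
      have hφ1c : Continuous (fun pr : 𝒳 × 𝒴 => φ pr.1) := hφc.comp continuous_fst
      have hintφ : ∀ (μ : Measure (𝒳 × 𝒴)) [IsFiniteMeasure μ],
          Integrable (fun pr : 𝒳 × 𝒴 => φ pr.1) μ := fun μ _ =>
        integrable_of_bdd hφ1c.stronglyMeasurable.aestronglyMeasurable fun pr => hφb' _
      have hmap : ∀ (m : Measure (𝒳 × 𝒴)), (∫ x, φ x ∂(m.map Prod.fst))
          = ∫ pr : 𝒳 × 𝒴, φ pr.1 ∂m := fun m =>
        integral_map measurable_fst.aemeasurable hφsm.aestronglyMeasurable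
      have hwd : ∀ (m : Measure (𝒳 × 𝒴)) (d : 𝒳 × 𝒴 → ℝ≥0), Measurable d →
          (∫ pr : 𝒳 × 𝒴, φ pr.1 ∂(m.withDensity fun pr => (d pr : ℝ≥0∞)))
            = ∫ pr : 𝒳 × 𝒴, (d pr : ℝ) • φ pr.1 ∂m := by
        intro m d hd
        rw [integral_withDensity_eq_integral_smul hd]
        exact integral_congr_ae (Filter.Eventually.of_forall fun pr => by
          simp only [NNReal.smul_def])
      -- integrability of weighted integrands
      have hintd : ∀ (d : 𝒳 × 𝒴 → ℝ), Continuous d → (∀ pr, |d pr| ≤ Bψ' * ‖g‖) →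
          ∀ (m : Measure (𝒳 × 𝒴)) [IsFiniteMeasure m],
          Integrable (fun pr => d pr • φ pr.1) m := by
        intro d hd hdb m _
        refine integrable_of_bdd (hd.smul hφ1c).stronglyMeasurable.aestronglyMeasurable
          (C := (Bψ' * ‖g‖) * Bφ') fun pr => ?_
        rw [norm_smul, Real.norm_eq_abs]
        exact mul_le_mul (hdb pr) (hφb' _) (norm_nonneg _)
          (mul_nonneg hBψ0 (norm_nonneg _))
      have hdposc : Continuous (fun pr => ((dpos pr : ℝ))) :=
        NNReal.continuous_coe.comp (continuous_real_toNNReal.comp hhc)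
      have hdnegc : Continuous (fun pr => ((dneg pr : ℝ))) :=
        NNReal.continuous_coe.comp (continuous_real_toNNReal.comp hhc.neg)
      have hdposrb : ∀ pr, |(dpos pr : ℝ)| ≤ Bψ' * ‖g‖ := fun pr => by
        rw [abs_of_nonneg (dpos pr).coe_nonneg]
        show ((h pr).toNNReal : ℝ) ≤ _
        rw [Real.coe_toNNReal']
        exact max_le ((le_abs_self _).trans (hhb pr)) (mul_nonneg hBψ0 (norm_nonneg _))
      have hdnegrb : ∀ pr, |(dneg pr : ℝ)| ≤ Bψ' * ‖g‖ := fun pr => by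
        rw [abs_of_nonneg (dneg pr).coe_nonneg]
        show ((-h pr).toNNReal : ℝ) ≤ _
        rw [Real.coe_toNNReal']
        exact max_le ((neg_le_abs _).trans (hhb pr)) (mul_nonneg hBψ0 (norm_nonneg _))
      have hcomb : ∀ (m : Measure (𝒳 × 𝒴)) [IsFiniteMeasure m],
          (∫ pr : 𝒳 × 𝒴, (dpos pr : ℝ) • φ pr.1 ∂m)
            - ∫ pr : 𝒳 × 𝒴, (dneg pr : ℝ) • φ pr.1 ∂m
            = ∫ pr : 𝒳 × 𝒴, h pr • φ pr.1 ∂m := by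
        intro m _
        rw [← integral_sub (hintd _ hdposc hdposrb m) (hintd _ hdnegc hdnegrb m)]
        refine integral_congr_ae (Filter.Eventually.of_forall fun pr => ?_)
        show (dpos pr : ℝ) • φ pr.1 - (dneg pr : ℝ) • φ pr.1 = h pr • φ pr.1
        rw [← sub_smul]
        congr 1
        simp only [hdpos, hdneg, Real.coe_toNNReal']
        rcases le_total 0 (h pr) with hh | hh
        · rw [max_eq_left hh, max_eq_right (by linarith)]; ring
        · rw [max_eq_right hh, max_eq_left (by linarith)]; ring
      have hv : sInt (a.toSignedMeasure - b.toSignedMeasure) φ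
          = (∫ pr : 𝒳 × 𝒴, h pr • φ pr.1 ∂p) - ∫ pr : 𝒳 × 𝒴, h pr • φ pr.1 ∂q := by
        rw [sInt_sub_eq hφsm hφb', hadef, hbdef, hmap, hmap, hma, hmb,
          integral_add_measure (hintφ _) (hintφ _), integral_add_measure (hintφ _) (hintφ _),
          hwd p dpos hdposm, hwd q dneg hdnegm, hwd p dneg hdnegm, hwd q dpos hdposm,
          ← hcomb p, ← hcomb q]
        abel
      have hv0 : sInt (a.toSignedMeasure - b.toSignedMeasure) φ = 0 := by
        rw [hv]
        have hinner : ∀ f : F,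
            ⟪f, (∫ pr : 𝒳 × 𝒴, h pr • φ pr.1 ∂p) - ∫ pr : 𝒳 × 𝒴, h pr • φ pr.1 ∂q⟫_ℝ = 0 := by
          intro f
          rw [inner_sub_right]
          have hip : ∀ (m : Measure (𝒳 × 𝒴)) [IsFiniteMeasure m],
              ⟪f, ∫ pr : 𝒳 × 𝒴, h pr • φ pr.1 ∂m⟫_ℝ
                = ∫ pr : 𝒳 × 𝒴, ⟪φ pr.1, f⟫_ℝ * ⟪ψ pr.2, g⟫_ℝ ∂m := by
            intro m _
            rw [show ⟪f, ∫ pr : 𝒳 × 𝒴, h pr • φ pr.1 ∂m⟫_ℝ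
                = innerSL ℝ f (∫ pr : 𝒳 × 𝒴, h pr • φ pr.1 ∂m) from rfl,
              ← (innerSL ℝ f).integral_comp_comm (hintd _ hhc hhb m)]
            refine integral_congr_ae (Filter.Eventually.of_forall fun pr => ?_)
            simp only [innerSL_apply_apply, real_inner_smul_right]
            rw [real_inner_comm (φ pr.1) f]
            ring
          rw [hip p, hip q, E1 f g, sub_self]
        have := hinner ((∫ pr : 𝒳 × 𝒴, h pr • φ pr.1 ∂p) - ∫ pr : 𝒳 × 𝒴, h pr • φ pr.1 ∂q)
        rw [real_inner_comm] at this
        exact inner_self_eq_zero.mp this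
      have hab : a = b := by
        refine measure_eq_of_toSignedMeasure_eq (sub_eq_zero.mp (hk ?_))
        show sInt (a.toSignedMeasure - b.toSignedMeasure) φ = sInt 0 φ
        rw [hv0, sInt_zero]
      -- convert the measure identity into the needed scalar identity
      have hAA := congrArg (fun m : Measure 𝒳 => m A) hab
      simp only [hadef, hbdef, hma, hmb, Measure.map_apply measurable_fst hA,
        Measure.add_apply, withDensity_apply _ (measurable_fst hA)] at hAA
      refine integral_eq_of_lintegral_eq
        (integrable_of_bdd hhc.stronglyMeasurable.aestronglyMeasurable
          (C := Bψ' * ‖g‖) fun pr => (Real.norm_eq_abs _).le.trans (hhb pr))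
        (integrable_of_bdd hhc.stronglyMeasurable.aestronglyMeasurable
          (C := Bψ' * ‖g‖) fun pr => (Real.norm_eq_abs _).le.trans (hhb pr)) ?_
      exact hAA
    -- Step 3 : use injectivity in the second variable
    set c1 : Measure 𝒴 := (p.restrict S).map Prod.snd with hc1
    set c2 : Measure 𝒴 := (q.restrict S).map Prod.snd with hc2
    haveI : IsFiniteMeasure c1 := by
      constructor
      rw [hc1, Measure.map_apply measurable_snd MeasurableSet.univ]
      exact measure_lt_top _ _
    haveI : IsFiniteMeasure c2 := by
      constructor
      rw [hc2, Measure.map_apply measurable_snd MeasurableSet.univ]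
      exact measure_lt_top _ _
    have hψ2sm : StronglyMeasurable (fun pr : 𝒳 × 𝒴 => ψ pr.2) :=
      (hψc.comp continuous_snd).stronglyMeasurable
    have hintψ : ∀ (m : Measure (𝒳 × 𝒴)) [IsFiniteMeasure m],
        Integrable (fun pr : 𝒳 × 𝒴 => ψ pr.2) m := fun m _ =>
      integrable_of_bdd hψ2sm.aestronglyMeasurable fun pr => hψb' _
    have hν : sInt (c1.toSignedMeasure - c2.toSignedMeasure) ψ
        = (∫ pr : 𝒳 × 𝒴, ψ pr.2 ∂(p.restrict S)) - ∫ pr : 𝒳 × 𝒴, ψ pr.2 ∂(q.restrict S) := by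
      rw [sInt_sub_eq hψsm hψb', hc1, hc2,
        integral_map measurable_snd.aemeasurable hψsm.aestronglyMeasurable,
        integral_map measurable_snd.aemeasurable hψsm.aestronglyMeasurable]
    have hν0 : sInt (c1.toSignedMeasure - c2.toSignedMeasure) ψ = 0 := by
      rw [hν]
      have hinner : ∀ g : G,
          ⟪g, (∫ pr : 𝒳 × 𝒴, ψ pr.2 ∂(p.restrict S))
            - ∫ pr : 𝒳 × 𝒴, ψ pr.2 ∂(q.restrict S)⟫_ℝ = 0 := by
        intro g
        rw [inner_sub_right]
        have hip : ∀ (m : Measure (𝒳 × 𝒴)) [IsFiniteMeasure m],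
            ⟪g, ∫ pr : 𝒳 × 𝒴, ψ pr.2 ∂m⟫_ℝ = ∫ pr : 𝒳 × 𝒴, ⟪ψ pr.2, g⟫_ℝ ∂m := by
          intro m _
          rw [show ⟪g, ∫ pr : 𝒳 × 𝒴, ψ pr.2 ∂m⟫_ℝ
              = innerSL ℝ g (∫ pr : 𝒳 × 𝒴, ψ pr.2 ∂m) from rfl,
            ← (innerSL ℝ g).integral_comp_comm (hintψ m)]
          refine integral_congr_ae (Filter.Eventually.of_forall fun pr => ?_)
          simp only [innerSL_apply_apply]
          exact real_inner_comm _ _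
        rw [hip (p.restrict S), hip (q.restrict S), E2 g, sub_self]
      have := hinner ((∫ pr : 𝒳 × 𝒴, ψ pr.2 ∂(p.restrict S))
        - ∫ pr : 𝒳 × 𝒴, ψ pr.2 ∂(q.restrict S))
      rw [real_inner_comm] at this
      exact inner_self_eq_zero.mp this
    have hcc : c1 = c2 := by
      refine measure_eq_of_toSignedMeasure_eq (sub_eq_zero.mp (hl ?_))
      show sInt (c1.toSignedMeasure - c2.toSignedMeasure) ψ = sInt 0 ψ
      rw [hν0, sInt_zero]
    have hBB := congrArg (fun m : Measure 𝒴 => m B) hcc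
    simp only [hc1, hc2, Measure.map_apply measurable_snd hB,
      Measure.restrict_apply (measurable_snd hB)] at hBB
    have hABs : Prod.snd ⁻¹' B ∩ S = A ×ˢ B := by
      rw [hSdef]
      ext pr
      simp only [Set.mem_inter_iff, Set.mem_preimage, Set.mem_prod]
      tauto
    rwa [hABs] at hBB
  -- Step 4 : conclude p = q and θ = 0
  have hpq : p = q := by
    refine ext_of_generate_finite _ generateFrom_prod.symm isPiSystem_prod ?_ ?_
    · rintro s ⟨A, hA, B, hB, rfl⟩
      exact hrect A hA B hB
    · have := hrect univ MeasurableSet.univ univ MeasurableSet.univ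
      rwa [Set.univ_prod_univ] at this
  have hθ0 : θ.toJordanDecomposition.toSignedMeasure = 0 := by
    show p.toSignedMeasure - q.toSignedMeasure = 0
    have h1 : p.toSignedMeasure = q.toSignedMeasure := by
      ext s hs
      rw [Measure.toSignedMeasure_apply_measurable hs,
        Measure.toSignedMeasure_apply_measurable hs, hpq]
    rw [h1, sub_self]
  calc θ = θ.toJordanDecomposition.toSignedMeasure :=
        θ.toSignedMeasure_toJordanDecomposition.symm
    _ = 0 := hθ0
end

section
/- If for every f ∈ ℱ and every Borel set B ⊆ 𝒴 one has ∫_{𝒳×𝒴} ⟨φ(x), f⟩ 𝟙_B(y) dθ(x,y) = 0, and the mean embedding of finite signed measures on 𝒳 into ℱ is injective, then θ(A × B) = 0 for all Borel sets A ⊆ 𝒳, B ⊆ 𝒴. -/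
open MeasureTheory
open scoped InnerProductSpace ENNReal

lemma jordan_of_measure {X : Type*} [MeasurableSpace X] (ρ : Measure X) [IsFiniteMeasure ρ] :
    ρ.toSignedMeasure.toJordanDecomposition =
      ⟨ρ, 0, Measure.MutuallySingular.zero_right⟩ := by
  have h : (⟨ρ, 0, Measure.MutuallySingular.zero_right⟩ :
      JordanDecomposition X).toSignedMeasure = ρ.toSignedMeasure := by
    simp [JordanDecomposition.toSignedMeasure]
  rw [← h, JordanDecomposition.toJordanDecomposition_toSignedMeasure]

lemma sInt_toSignedMeasure {X E : Type*} [MeasurableSpace X] [NormedAddCommGroup E]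
    [NormedSpace ℝ E] [CompleteSpace E] (ρ : Measure X) [IsFiniteMeasure ρ] (f : X → E) :
    sInt ρ.toSignedMeasure f = ∫ x, f x ∂ρ := by
  simp [sInt, jordan_of_measure]

/-- Injectivity of `μ ↦ sInt μ φ` forces `φ` to be integrable against every finite measure
(otherwise `ρ` and `ρ + ρ` would have the same image). -/
lemma integrable_of_inj {X E : Type*} [MeasurableSpace X] [NormedAddCommGroup E]
    [NormedSpace ℝ E] [CompleteSpace E] {φ : X → E}
    (hk : Function.Injective (fun μ : SignedMeasure X => sInt μ φ))
    (ρ : Measure X) [IsFiniteMeasure ρ] : Integrable φ ρ := by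
  by_cases h : Integrable φ ρ
  · exact h
  · exfalso
    have h2 : ¬ Integrable φ (ρ + ρ) := fun h2 =>
      h (h2.mono_measure (Measure.le_add_right le_rfl))
    have e1 : sInt ρ.toSignedMeasure φ = 0 := by
      rw [sInt_toSignedMeasure]; exact integral_undef h
    have e2 : sInt (ρ + ρ).toSignedMeasure φ = 0 := by
      rw [sInt_toSignedMeasure]; exact integral_undef h2
    have heq : ρ.toSignedMeasure = (ρ + ρ).toSignedMeasure := hk (e1.trans e2.symm)
    have hρ : ρ = ρ + ρ := Measure.toSignedMeasure_eq_toSignedMeasure_iff.mp heq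
    have hu : ρ Set.univ + 0 = ρ Set.univ + ρ Set.univ := by
      simpa using congrArg (fun m : Measure X => m Set.univ) hρ
    have h0 : (0 : ℝ≥0∞) = ρ Set.univ :=
      (ENNReal.add_right_inj (measure_ne_top ρ _)).mp hu
    have : ρ = 0 := Measure.measure_univ_eq_zero.mp h0.symm
    rw [this] at h
    exact h (integrable_zero_measure)

lemma sInt_of_sub {X E : Type*} [MeasurableSpace X] [NormedAddCommGroup E]
    [NormedSpace ℝ E] [CompleteSpace E] (μ ν : Measure X) [IsFiniteMeasure μ]
    [IsFiniteMeasure ν] {f : X → E}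
    (hi : ∀ (ρ : Measure X) [IsFiniteMeasure ρ], Integrable f ρ) :
    sInt (μ.toSignedMeasure - ν.toSignedMeasure) f = (∫ x, f x ∂μ) - ∫ x, f x ∂ν := by
  set s : SignedMeasure X := μ.toSignedMeasure - ν.toSignedMeasure with hs
  have hJ : s.toJordanDecomposition.posPart.toSignedMeasure -
      s.toJordanDecomposition.negPart.toSignedMeasure = s := by
    rw [← MeasureTheory.JordanDecomposition.toSignedMeasure]
    exact s.toSignedMeasure_toJordanDecomposition
  have hmeas : μ + s.toJordanDecomposition.negPart = s.toJordanDecomposition.posPart + ν := by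
    ext t ht
    have := congrArg (fun m => m t) (hJ.trans hs)
    simp only [VectorMeasure.sub_apply, Measure.toSignedMeasure_apply_measurable ht] at this
    have h1 := measure_ne_top μ t
    have h2 := measure_ne_top ν t
    have h3 := measure_ne_top s.toJordanDecomposition.posPart t
    have h4 := measure_ne_top s.toJordanDecomposition.negPart t
    simp only [Measure.add_apply]
    have : (μ t).toReal + (s.toJordanDecomposition.negPart t).toReal =
        (s.toJordanDecomposition.posPart t).toReal + (ν t).toReal := by
      simp only [measureReal_def] at this; linarith
    rw [← ENNReal.toReal_add h1 h4, ← ENNReal.toReal_add h3 h2] at this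
    exact (ENNReal.toReal_eq_toReal_iff' (by finiteness) (by finiteness)).mp this
  have := congrArg (fun m => ∫ x, f x ∂m) hmeas
  simp only [integral_add_measure (hi _) (hi _)] at this
  simp only [sInt]
  rw [sub_eq_sub_iff_add_eq_add]
  exact this.symm

theorem stmt6 {𝒳 𝒴 : Type*} [MeasurableSpace 𝒳] [TopologicalSpace 𝒳] [PolishSpace 𝒳] [BorelSpace 𝒳]
    [MeasurableSpace 𝒴] [TopologicalSpace 𝒴] [PolishSpace 𝒴] [BorelSpace 𝒴] {F : Type*} [NormedAddCommGroup F] [InnerProductSpace ℝ F] [CompleteSpace F] [MeasurableSpace F] [BorelSpace F]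
    (φ : 𝒳 → F) (hφm : Measurable φ) (Bφ : ℝ) (hφb : ∀ x, ‖φ x‖ ≤ Bφ)
    (θ : SignedMeasure (𝒳 × 𝒴))
    (hk : Function.Injective (fun μ : SignedMeasure 𝒳 => sInt μ φ))
    (h : ∀ (f : F) (B : Set 𝒴), MeasurableSet B →
      sInt θ (fun p => ⟪φ p.1, f⟫_ℝ * B.indicator (1 : 𝒴 → ℝ) p.2) = 0) :
    ∀ (A : Set 𝒳) (B : Set 𝒴), MeasurableSet A → MeasurableSet B →
      θ (A ×ˢ B) = 0 := by
  intro A B hA hB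
  have hint : ∀ (ρ : Measure 𝒳) [IsFiniteMeasure ρ], Integrable φ ρ := fun ρ _ =>
    integrable_of_inj hk ρ
  set P := θ.toJordanDecomposition.posPart with hP
  set N := θ.toJordanDecomposition.negPart with hN
  set S : Set (𝒳 × 𝒴) := Set.univ ×ˢ B with hSdef
  have hS : MeasurableSet S := MeasurableSet.univ.prod hB
  set P' : Measure 𝒳 := (P.restrict S).map Prod.fst with hP'
  set N' : Measure 𝒳 := (N.restrict S).map Prod.fst with hN'
  have instP' : IsFiniteMeasure P' := by
    rw [hP']; exact Measure.isFiniteMeasure_map _ _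
  have instN' : IsFiniteMeasure N' := by
    rw [hN']; exact Measure.isFiniteMeasure_map _ _
  set μB : SignedMeasure 𝒳 := P'.toSignedMeasure - N'.toSignedMeasure with hμB
  -- key : sInt μB φ = 0
  have hinner : ∀ f : F, ⟪sInt μB φ, f⟫_ℝ = 0 := by
    intro f
    have hgm : Measurable (fun x : 𝒳 => ⟪φ x, f⟫_ℝ) := by
      have he : (fun x : 𝒳 => ⟪φ x, f⟫_ℝ) = fun x => (innerSL ℝ f) (φ x) :=
        funext fun x => real_inner_comm _ _
      rw [he]
      exact ((innerSL ℝ f).continuous.measurable).comp hφm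
    have hg : ∀ (ρ : Measure (𝒳 × 𝒴)) [IsFiniteMeasure ρ],
        ∫ p, ⟪φ p.1, f⟫_ℝ * B.indicator (1 : 𝒴 → ℝ) p.2 ∂ρ =
          ∫ x, ⟪φ x, f⟫_ℝ ∂((ρ.restrict S).map Prod.fst) := by
      intro ρ _
      have heq : (fun p : 𝒳 × 𝒴 => ⟪φ p.1, f⟫_ℝ * B.indicator (1 : 𝒴 → ℝ) p.2) =
          S.indicator (fun p : 𝒳 × 𝒴 => ⟪φ p.1, f⟫_ℝ) := by
        funext p
        by_cases hp : p.2 ∈ B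
        · simp [Set.indicator_of_mem hp, Set.indicator_of_mem (show p ∈ S by simp [hSdef, hp])]
        · simp [Set.indicator_of_notMem hp,
            Set.indicator_of_notMem (show p ∉ S by simp [hSdef, hp])]
      rw [heq, integral_indicator hS,
        integral_map measurable_fst.aemeasurable hgm.aestronglyMeasurable]
    have hL : ∀ (ρ : Measure 𝒳) [IsFiniteMeasure ρ],
        ∫ x, ⟪φ x, f⟫_ℝ ∂ρ = ⟪∫ x, φ x ∂ρ, f⟫_ℝ := by
      intro ρ _
      have he : ∀ x, ⟪φ x, f⟫_ℝ = (innerSL ℝ f) (φ x) := fun x => (real_inner_comm _ _)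
      simp_rw [he]
      rw [ContinuousLinearMap.integral_comp_comm _ (hint ρ)]
      exact real_inner_comm _ _
    have h0 := h f B hB
    have hsInt : sInt μB φ = (∫ x, φ x ∂P') - ∫ x, φ x ∂N' := sInt_of_sub P' N' hint
    rw [hsInt, inner_sub_left, ← hL P', ← hL N', ← hg P, ← hg N]
    simpa [sInt] using h0
  have hzero : sInt μB φ = 0 := inner_self_eq_zero.mp (hinner (sInt μB φ))
  have hμB0 : μB = 0 := by
    apply hk
    simp only [hzero]
    simp [sInt, SignedMeasure.toJordanDecomposition_zero]
  -- evaluate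
  have hApre : Prod.fst ⁻¹' A ∩ S = A ×ˢ B := by
    ext p; simp [hSdef, Set.mem_prod, and_comm]
  have hPA : P' A = P (A ×ˢ B) := by
    rw [hP', Measure.map_apply measurable_fst hA, Measure.restrict_apply (measurable_fst hA),
      hApre]
  have hNA : N' A = N (A ×ˢ B) := by
    rw [hN', Measure.map_apply measurable_fst hA, Measure.restrict_apply (measurable_fst hA),
      hApre]
  have hθ : θ (A ×ˢ B) = (P (A ×ˢ B)).toReal - (N (A ×ˢ B)).toReal := by
    conv_lhs => rw [← θ.toSignedMeasure_toJordanDecomposition]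
    rw [JordanDecomposition.toSignedMeasure, VectorMeasure.sub_apply,
      Measure.toSignedMeasure_apply_measurable (hA.prod hB),
      Measure.toSignedMeasure_apply_measurable (hA.prod hB)]
    rfl
  have hμBA : μB A = (P' A).toReal - (N' A).toReal := by
    rw [hμB, VectorMeasure.sub_apply, Measure.toSignedMeasure_apply_measurable hA,
      Measure.toSignedMeasure_apply_measurable hA]
    rfl
  rw [hθ, ← hPA, ← hNA, ← hμBA, hμB0]
  simp
end
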